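/- (Sufficiency for N = 3) If u is a real number with m_1/n < u < m_1/(m_1+m_2) and v = m_2/(n(1-u)), then (u, v) is a ratio vector: there exist real numbers r_1 < r_2 < r_3 such that the ratios of p(x) = (x-r_1)^{m_1}(x-r_2)^{m_2}(x-r_3)^{m_3} are exactly (σ_1, σ_2) = (u, v). In fact one may take r_1 = 0, r_2 = 1, r_3 = u((1-u)n - m_2)/(m_1 - (m_1+m_2)u). -/

import Mathlib

/-- Sufficiency for `N = 3`: if `m₁/n < u < m₁/(m₁+m₂)` and `v = m₂/(n(1-u))`,
then `(u,v)` is a ratio vector, realized by roots `0 < 1 < r` with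
`r = u((1-u)n - m₂)/(m₁ - (m₁+m₂)u)`. -/
theorem stmt_5 (m1 m2 m3 : ℝ) (hm1 : 0 < m1) (hm2 : 0 < m2) (hm3 : 0 < m3)
    (n : ℝ) (hn : n = m1 + m2 + m3)
    (u v : ℝ) (hu1 : m1 / n < u) (hu2 : u < m1 / (m1 + m2))
    (hv : v = m2 / (n * (1 - u))) :
    ∃ r : ℝ, r = u * ((1 - u) * n - m2) / (m1 - (m1 + m2) * u) ∧ 1 < r ∧
      ∃ x1 x2 : ℝ, x1 ∈ Set.Ioo (0 : ℝ) 1 ∧ x2 ∈ Set.Ioo 1 r ∧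
        m1 / (x1 - 0) + m2 / (x1 - 1) + m3 / (x1 - r) = 0 ∧
        m1 / (x2 - 0) + m2 / (x2 - 1) + m3 / (x2 - r) = 0 ∧
        (x1 - 0) / (1 - 0) = u ∧ (x2 - 1) / (r - 1) = v := by
  have hn0 : 0 < n := by rw [hn]; linarith
  have hm12 : 0 < m1 + m2 := by linarith
  have hu0 : 0 < u := lt_trans (div_pos hm1 hn0) hu1
  have hD : 0 < m1 - (m1 + m2) * u := by
    rw [lt_div_iff₀ hm12] at hu2; linarith
  have hDne : m1 - (m1 + m2) * u ≠ 0 := ne_of_gt hD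
  have hu1' : u < 1 := by nlinarith
  have h1u : 0 < 1 - u := by linarith
  have h1une : (1 : ℝ) - u ≠ 0 := ne_of_gt h1u
  have hnu : 0 < u * n - m1 := by
    rw [div_lt_iff₀ hn0] at hu1; linarith
  have hnune : u * n - m1 ≠ 0 := ne_of_gt hnu
  have hA : 0 < (1 - u) * n - m2 := by
    have h : (1 - u) * n - m2 = (1 - u) * m3 + (m1 - (m1 + m2) * u) := by
      rw [hn]; ring
    rw [h]; positivity
  have hAne : (1 - u) * n - m2 ≠ 0 := ne_of_gt hA
  obtain ⟨r, hrdef⟩ : ∃ r : ℝ, r = u * ((1 - u) * n - m2) / (m1 - (m1 + m2) * u) :=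
    ⟨_, rfl⟩
  have hr1 : 1 < r := by
    rw [hrdef, lt_div_iff₀ hD]
    nlinarith [mul_pos h1u hnu]
  have hvpos : 0 < v := by rw [hv]; positivity
  have hv1 : v < 1 := by
    rw [hv, div_lt_one (by positivity)]
    nlinarith
  -- intermediate closed forms
  have h_ur : u - r = -(u * (1 - u) * m3) / (m1 - (m1 + m2) * u) := by
    rw [hrdef, hn, eq_div_iff hDne, sub_mul, div_mul_cancel₀ _ hDne]; ring
  have hrm1 : r - 1 = (1 - u) * (u * n - m1) / (m1 - (m1 + m2) * u) := by
    rw [hrdef, eq_div_iff hDne, sub_mul, div_mul_cancel₀ _ hDne]; ring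
  have hvr : v * (r - 1) = m2 * (u * n - m1) / (n * (m1 - (m1 + m2) * u)) := by
    rw [hv, hrm1]; field_simp
  have hx2 : 1 + v * (r - 1) =
      m1 * ((1 - u) * n - m2) / (n * (m1 - (m1 + m2) * u)) := by
    rw [hvr, eq_div_iff (mul_ne_zero hn0.ne' hDne), add_mul, div_mul_cancel₀ _ (mul_ne_zero hn0.ne' hDne)]; ring
  have hx2r : 1 + v * (r - 1) - r =
      -(((1 - u) * n - m2) * (u * n - m1)) / (n * (m1 - (m1 + m2) * u)) := by
    rw [hx2, hrdef]; field_simp; ring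
  refine ⟨r, hrdef, hr1, u, 1 + v * (r - 1), ⟨hu0, hu1'⟩,
    ⟨by nlinarith [mul_pos hvpos (sub_pos.2 hr1)],
     by nlinarith [mul_pos (sub_pos.2 hv1) (sub_pos.2 hr1)]⟩, ?_, ?_, by simp, ?_⟩
  · -- first equation
    have e3 : m3 / (u - r) = -((m1 - (m1 + m2) * u) / (u * (1 - u))) := by
      rw [h_ur]; field_simp
    rw [sub_zero, e3]
    have hu1ne : u - 1 ≠ 0 := sub_ne_zero.2 (ne_of_lt hu1')
    field_simp
    ring
  · -- second equation
    have e1 : m1 / (1 + v * (r - 1) - 0) =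
        n * (m1 - (m1 + m2) * u) / ((1 - u) * n - m2) := by
      rw [sub_zero, hx2]; field_simp
    have e2 : m2 / (1 + v * (r - 1) - 1) =
        n * (m1 - (m1 + m2) * u) / (u * n - m1) := by
      have h : 1 + v * (r - 1) - 1 = m2 * (u * n - m1) / (n * (m1 - (m1 + m2) * u)) := by
        rw [← hvr]; ring
      rw [h]; field_simp
    have e3 : m3 / (1 + v * (r - 1) - r) =
        -(m3 * (n * (m1 - (m1 + m2) * u)) / (((1 - u) * n - m2) * (u * n - m1))) := by
      rw [hx2r]; field_simp
    rw [e1, e2, e3, hn]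
    have hAne' : (1 - u) * (m1 + m2 + m3) - m2 ≠ 0 := by rw [← hn]; exact hAne
    have hnune' : u * (m1 + m2 + m3) - m1 ≠ 0 := by rw [← hn]; exact hnune
    rw [div_add_div _ _ hAne' hnune', ← sub_eq_add_neg, ← sub_div, div_eq_zero_iff]
    left; ring
  · have h : 1 + v * (r - 1) - 1 = v * (r - 1) := by ring
    rw [h, mul_div_assoc, div_self (sub_ne_zero.2 (ne_of_gt hr1)), mul_one]
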